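/- Let $T\in(0,1)$ and $\epsilon_0=T/20$. Let $(X,x)$ and $(Y,y)$ be length metric spaces with: (1) the closure of $B_2(x)$ compact; (2) $d_{GH}((X,x),(Y,y))\le\epsilon_0$; (3) for any $q\in B_1(x)$, every loop contained in $B_T(q)$ is contractible in $B_1(q)$. If $c$ is a loop in $B_1(y)$ and $c',c''$ are two loops in $X$ each $5\epsilon_0$-close to $c$, then $c'$ and $c''$ are freely homotopic in $B_2(x)$. -/

import Mathlib

open Metric Filter Topology MeasureTheory
open scoped ENNReal NNReal

noncomputable section

/-- A loop, parametrized by `[0,1]` with equal endpoints, is contractible within the set `S`: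
it admits a free homotopy, with image inside `S`, to a constant loop. -/
def LoopContractibleIn {X : Type*} [TopologicalSpace X] (c : C(unitInterval, X))
    (S : Set X) : Prop :=
  ∃ (H : C(unitInterval × unitInterval, X)) (x₀ : X),
    (∀ t, H (t, 0) = c t) ∧ (∀ t, H (t, 1) = x₀) ∧ (∀ s, H (0, s) = H (1, s)) ∧
    Set.range H ⊆ S

/-- The module of `1`-contractibility `ρ(t,x)`: the infimum of all `ρ ≥ t` such that every
loop in `B_t(x)` is contractible in `B_ρ(x)` (and `∞` if there is no such `ρ`). -/
def contrMod {X : Type*} [PseudoEMetricSpace X] (t : ℝ≥0∞) (x : X) : ℝ≥0∞ :=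
  sInf {ρ : ℝ≥0∞ | t ≤ ρ ∧ ∀ c : C(unitInterval, X), c 0 = c 1 →
    Set.range c ⊆ EMetric.ball x t → LoopContractibleIn c (EMetric.ball x ρ)}

/-- A length metric space: the distance between two points is the infimum of the lengths
of paths joining them. -/
def IsLengthSpace (X : Type*) [PseudoEMetricSpace X] : Prop :=
  ∀ x y : X, edist x y = ⨅ γ : Path x y, eVariationOn (fun t : ℝ => γ.extend t) (Set.Icc 0 1)

/-- An `ε`-Gromov–Hausdorff approximation: `f` distorts distances by at most `ε`
and has `ε`-dense image. -/
def IsGHApprox {A B : Type*} [PseudoMetricSpace A] [PseudoMetricSpace B]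
    (f : A → B) (ε : ℝ) : Prop :=
  (∀ u v : A, |dist (f u) (f v) - dist u v| ≤ ε) ∧ ∀ b : B, ∃ a : A, dist (f a) b ≤ ε

/-- A pointed `ε`-Gromov–Hausdorff approximation. -/
def IsPointedGHApprox {A B : Type*} [PseudoMetricSpace A] [PseudoMetricSpace B]
    (f : A → B) (a : A) (b : B) (ε : ℝ) : Prop :=
  dist (f a) b ≤ ε ∧ IsGHApprox f ε

/-- A pointed `ε`-approximation at scale `R` (distortion and density on `R`-balls around
the base points). -/
def IsPGHApproxOn {A B : Type*} [PseudoMetricSpace A] [PseudoMetricSpace B]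
    (f : A → B) (a : A) (b : B) (R ε : ℝ) : Prop :=
  dist (f a) b ≤ ε ∧
  (∀ u ∈ Metric.closedBall a R, ∀ v ∈ Metric.closedBall a R,
    |dist (f u) (f v) - dist u v| ≤ ε) ∧
  ∀ y ∈ Metric.closedBall b R, ∃ u ∈ Metric.closedBall a R, dist (f u) y ≤ ε

/-- Pointed Gromov–Hausdorff convergence of `(M i, p i)` to `(X, x)`. -/
def PointedGHLim (M : ℕ → Type*) [∀ i, MetricSpace (M i)] (p : ∀ i, M i)
    (X : Type*) [MetricSpace X] (x : X) : Prop :=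
  ∀ R > 0, ∀ ε > 0, ∀ᶠ i in atTop, ∃ f : M i → X, IsPGHApproxOn f (p i) x R ε

/-- Gromov–Hausdorff convergence of a sequence of metric spaces to `X`. -/
def GHLim (M : ℕ → Type*) [∀ i, MetricSpace (M i)] (X : Type*) [MetricSpace X] : Prop :=
  ∀ ε > 0, ∀ᶠ i in atTop, ∃ f : M i → X, IsGHApprox f ε

/-- The comparison function `sn_c` for the space form of constant curvature `c`. -/
def modelSn (c t : ℝ) : ℝ :=
  if 0 < c then Real.sin (Real.sqrt c * t) / Real.sqrt c
  else if c < 0 then Real.sinh (Real.sqrt (-c) * t) / Real.sqrt (-c)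
  else t

/-- The volume of the ball of radius `r` in the `n`-dimensional simply connected space form
of constant curvature `c`. -/
def modelBallVol (n : ℕ) (c r : ℝ) : ℝ :=
  (μH[(n : ℝ) - 1] (Metric.sphere (0 : EuclideanSpace ℝ (Fin n)) 1)).toReal *
    ∫ t in (0:ℝ)..r, modelSn c t ^ (n - 1)

/-- Synthetic stand-in for the Ricci curvature lower bound `Ric ≥ (n-1)c` on an
`n`-dimensional Riemannian manifold: the Bishop–Gromov relative volume comparison with
respect to the `n`-dimensional Hausdorff measure (which is the Riemannian volume). -/
def RicciGE (M : Type*) [MetricSpace M] [MeasurableSpace M] [BorelSpace M]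
    (n : ℕ) (c : ℝ) : Prop :=
  ∀ x : M, ∀ r R : ℝ, 0 < r → r ≤ R →
    μH[(n : ℝ)] (Metric.ball x R) * ENNReal.ofReal (modelBallVol n c r) ≤
      μH[(n : ℝ)] (Metric.ball x r) * ENNReal.ofReal (modelBallVol n c R)

/-- Localized version of `RicciGE`: `Ric ≥ (n-1)c` on the region `s`. -/
def RicciGEOn (M : Type*) [MetricSpace M] [MeasurableSpace M] [BorelSpace M]
    (n : ℕ) (c : ℝ) (s : Set M) : Prop :=
  ∀ x ∈ s, ∀ r R : ℝ, 0 < r → r ≤ R → Metric.ball x R ⊆ s →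
    μH[(n : ℝ)] (Metric.ball x R) * ENNReal.ofReal (modelBallVol n c r) ≤
      μH[(n : ℝ)] (Metric.ball x r) * ENNReal.ofReal (modelBallVol n c R)

/-- The 1-skeleton of a simplicial complex in the plane. -/
def oneSkel (S : Geometry.SimplicialComplex ℝ ℂ) : Set ℂ :=
  ⋃ f ∈ {f ∈ S.faces | f.card ≤ 2}, convexHull ℝ (f : Set ℂ)

/-- Equicontinuity at `0` of a family of functions vanishing at `0`. -/
def EquicontAtZero (F : ℕ → ℝ≥0∞ → ℝ≥0∞) : Prop :=
  ∀ ε : ℝ≥0∞, 0 < ε → ∃ δ : ℝ≥0∞, 0 < δ ∧ ∀ i : ℕ, ∀ t < δ, F i t < ε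

end
noncomputable section Stmt4Aux
open Set


def Q01 : ℝ → unitInterval := Set.projIcc 0 1 zero_le_one

lemma Q01_continuous : Continuous Q01 := continuous_projIcc

lemma Q01_dist_le (a b : ℝ) : dist (Q01 a) (Q01 b) ≤ dist a b := by
  have := (LipschitzWith.projIcc (a := (0:ℝ)) (b := 1) zero_le_one).dist_le_mul a b
  simpa [Q01] using this

lemma Q01_coe {r : ℝ} (h0 : 0 ≤ r) (h1 : r ≤ 1) : (Q01 r : ℝ) = r := by
  rw [Q01, projIcc_of_mem zero_le_one ⟨h0, h1⟩]

lemma Q01_val (t : unitInterval) : Q01 ↑t = t := projIcc_val zero_le_one t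

lemma Q01_of_nonpos {r : ℝ} (h : r ≤ 0) : Q01 r = 0 := by
  rw [Q01, projIcc_of_le_left zero_le_one h]; rfl

lemma Q01_of_one_le {r : ℝ} (h : 1 ≤ r) : Q01 r = 1 := by
  rw [Q01, projIcc_of_right_le zero_le_one h]; rfl

variable {X : Type} [MetricSpace X]

def Hr (H : C(unitInterval × unitInterval, X)) : ℝ → ℝ → X :=
  fun a b => H (Q01 a, Q01 b)

def thB (p : ℝ × ℝ) : ℝ := (1/2 + (max p.2 (min p.1 (1 - p.2)) - 1/2) / (1 - 2*p.2)) / 4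
def thR (p : ℝ × ℝ) : ℝ := (3/2 + (max (1 - p.1) (min p.2 p.1) - 1/2) / (2*p.1 - 1)) / 4
def thT (p : ℝ × ℝ) : ℝ := (5/2 - (max (1 - p.2) (min p.1 p.2) - 1/2) / (2*p.2 - 1)) / 4
def thL (p : ℝ × ℝ) : ℝ := (7/2 - (max p.1 (min p.2 (1 - p.1)) - 1/2) / (1 - 2*p.1)) / 4

def secB (H : C(unitInterval × unitInterval, X)) : ℝ × ℝ → X := fun p => Hr H (thB p) (2*p.2)
def secR (H : C(unitInterval × unitInterval, X)) : ℝ × ℝ → X := fun p => Hr H (thR p) (2 - 2*p.1)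
def secT (H : C(unitInterval × unitInterval, X)) : ℝ × ℝ → X := fun p => Hr H (thT p) (2 - 2*p.2)
def secL (H : C(unitInterval × unitInterval, X)) : ℝ × ℝ → X := fun p => Hr H (thL p) (2*p.1)

def cl2 : ℝ × ℝ → ℝ × ℝ := fun p => (max 0 (min 1 p.1), max 0 (min 1 p.2))

def fillFun (H : C(unitInterval × unitInterval, X)) : ℝ × ℝ → X := fun p =>
  if (cl2 p).2 ≤ (cl2 p).1 then
    (if (cl2 p).2 ≤ 1 - (cl2 p).1 then secB H (cl2 p) else secR H (cl2 p))
  else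
    (if (cl2 p).2 ≤ 1 - (cl2 p).1 then secL H (cl2 p) else secT H (cl2 p))

section withH

variable (H : C(unitInterval × unitInterval, X)) (x₀ : X)

lemma Hr_top (htop : ∀ t, H (t, 1) = x₀) {a b : ℝ} (h1 : 1 ≤ b) : Hr H a b = x₀ := by
  rw [Hr, Q01_of_one_le h1, htop]

lemma Hr_lr (hlr : ∀ s, H (0, s) = H (1, s)) (b : ℝ) : Hr H 0 b = Hr H 1 b := by
  rw [Hr, Hr, Q01_of_nonpos le_rfl, Q01_of_one_le le_rfl, hlr]

end withH

lemma sectorCont (H : C(unitInterval × unitInterval, X)) (x₀ : X)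
    (htop : ∀ t, H (t, 1) = x₀) (θf rf : ℝ × ℝ → ℝ) (hrf : Continuous rf)
    (hθ : ∀ p, rf p ≠ 1 → ContinuousAt θf p) :
    Continuous fun p => H (Q01 (θf p), Q01 (rf p)) := by
  rw [continuous_iff_continuousAt]
  intro p₀
  by_cases h1 : rf p₀ = 1
  · rw [Metric.continuousAt_iff]
    intro ε hε
    obtain ⟨δ, hδ, hδ'⟩ := Metric.uniformContinuous_iff.1
      (CompactSpace.uniformContinuous_of_continuous H.continuous) ε hε
    obtain ⟨δ', hδ'pos, hd⟩ := Metric.continuousAt_iff.1 hrf.continuousAt δ hδ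
    refine ⟨δ', hδ'pos, fun {p} hp => ?_⟩
    have h2 : dist (rf p) (rf p₀) < δ := hd hp
    have key : dist ((Q01 (θf p), Q01 (rf p)) : unitInterval × unitInterval)
        (Q01 (θf p), (1 : unitInterval)) < δ := by
      rw [Prod.dist_eq]
      have hle : dist (Q01 (rf p)) (1 : unitInterval) ≤ dist (rf p) 1 := by
        have := Q01_dist_le (rf p) (rf p₀)
        rwa [h1, Q01_of_one_le le_rfl] at this
      have h3 : max (dist (Q01 (θf p)) (Q01 (θf p))) (dist (Q01 (rf p)) 1)
          = dist (Q01 (rf p)) 1 := by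
        rw [dist_self]; exact max_eq_right dist_nonneg
      rw [h3]
      exact lt_of_le_of_lt hle (by rwa [h1] at h2)
    have hH := hδ' key
    rw [htop (Q01 (θf p))] at hH
    have hval : H (Q01 (θf p₀), Q01 (rf p₀)) = x₀ := by
      rw [h1, Q01_of_one_le le_rfl, htop]
    rw [hval]
    exact hH
  · have hc1 : ContinuousAt (fun p => Q01 (θf p)) p₀ := Q01_continuous.continuousAt.comp (hθ p₀ h1)
    have hc2 : ContinuousAt (fun p => Q01 (rf p)) p₀ := Q01_continuous.continuousAt.comp hrf.continuousAt
    exact H.continuous.continuousAt.comp (hc1.prodMk hc2)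

section secCont

variable (H : C(unitInterval × unitInterval, X))

lemma secB_cont (x₀ : X) (htop : ∀ t, H (t, 1) = x₀) : Continuous (secB H) := by
  refine sectorCont H x₀ htop thB (fun p => 2*p.2) (by fun_prop) ?_
  intro p hp
  have hne : (1:ℝ) - 2*p.2 ≠ 0 := fun h => hp (show 2*p.2 = (1:ℝ) by linarith)
  have hnum : Continuous fun q : ℝ × ℝ => max q.2 (min q.1 (1 - q.2)) - 1/2 := by fun_prop
  have hden : Continuous fun q : ℝ × ℝ => (1:ℝ) - 2*q.2 := by fun_prop
  exact (continuousAt_const.add ((hnum.continuousAt).div (hden.continuousAt) hne)).div_const 4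

lemma secR_cont (x₀ : X) (htop : ∀ t, H (t, 1) = x₀) : Continuous (secR H) := by
  refine sectorCont H x₀ htop thR (fun p => 2 - 2*p.1) (by fun_prop) ?_
  intro p hp
  have hne : 2*p.1 - (1:ℝ) ≠ 0 := fun h => hp (show 2 - 2*p.1 = (1:ℝ) by linarith)
  have hnum : Continuous fun q : ℝ × ℝ => max (1 - q.1) (min q.2 q.1) - 1/2 := by fun_prop
  have hden : Continuous fun q : ℝ × ℝ => 2*q.1 - (1:ℝ) := by fun_prop
  exact (continuousAt_const.add ((hnum.continuousAt).div (hden.continuousAt) hne)).div_const 4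

lemma secT_cont (x₀ : X) (htop : ∀ t, H (t, 1) = x₀) : Continuous (secT H) := by
  refine sectorCont H x₀ htop thT (fun p => 2 - 2*p.2) (by fun_prop) ?_
  intro p hp
  have hne : 2*p.2 - (1:ℝ) ≠ 0 := fun h => hp (show 2 - 2*p.2 = (1:ℝ) by linarith)
  have hnum : Continuous fun q : ℝ × ℝ => max (1 - q.2) (min q.1 q.2) - 1/2 := by fun_prop
  have hden : Continuous fun q : ℝ × ℝ => 2*q.2 - (1:ℝ) := by fun_prop
  exact (continuousAt_const.sub ((hnum.continuousAt).div (hden.continuousAt) hne)).div_const 4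

lemma secL_cont (x₀ : X) (htop : ∀ t, H (t, 1) = x₀) : Continuous (secL H) := by
  refine sectorCont H x₀ htop thL (fun p => 2*p.1) (by fun_prop) ?_
  intro p hp
  have hne : (1:ℝ) - 2*p.1 ≠ 0 := fun h => hp (show 2*p.1 = (1:ℝ) by linarith)
  have hnum : Continuous fun q : ℝ × ℝ => max q.1 (min q.2 (1 - q.1)) - 1/2 := by fun_prop
  have hden : Continuous fun q : ℝ × ℝ => (1:ℝ) - 2*q.1 := by fun_prop
  exact (continuousAt_const.sub ((hnum.continuousAt).div (hden.continuousAt) hne)).div_const 4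

end secCont

section EqLemmas

variable (H : C(unitInterval × unitInterval, X)) (x₀ : X)

lemma eqBR (htop : ∀ t, H (t, 1) = x₀) {a b : ℝ} (hb : b = 1 - a) :
    secB H (a, b) = secR H (a, b) := by
  subst hb
  rcases le_or_gt a (1/2) with h | h
  · show Hr H (thB (a, 1-a)) (2*(1-a)) = Hr H (thR (a, 1-a)) (2-2*a)
    rw [Hr_top H x₀ htop (by linarith), Hr_top H x₀ htop (by linarith)]
  · have hθB : thB (a, 1-a) = 1/4 := by
      show (1/2 + (max (1-a) (min a (1 - (1-a))) - 1/2) / (1 - 2*(1-a)))/4 = 1/4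
      rw [show (1:ℝ) - (1-a) = a from by ring, min_self,
        max_eq_right (by linarith : 1 - a ≤ a),
        show (a - 1/2) / (1 - 2*(1-a)) = 1/2 from by
          rw [div_eq_iff (show (1:ℝ) - 2*(1-a) ≠ 0 from by intro hh; linarith)]; ring]
      norm_num
    have hθR : thR (a, 1-a) = 1/4 := by
      show (3/2 + (max (1-a) (min (1-a) a) - 1/2) / (2*a - 1))/4 = 1/4
      rw [min_eq_left (by linarith : 1-a ≤ a), max_self,
        show ((1-a) - 1/2) / (2*a - 1) = -(1/2) from by
          rw [div_eq_iff (show (2:ℝ)*a - 1 ≠ 0 from by intro hh; linarith)]; ring]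
      norm_num
    show Hr H (thB (a, 1-a)) (2*(1-a)) = Hr H (thR (a, 1-a)) (2-2*a)
    rw [hθB, hθR, show (2:ℝ)*(1-a) = 2-2*a from by ring]

lemma eqLT (htop : ∀ t, H (t, 1) = x₀) {a b : ℝ} (hb : b = 1 - a) :
    secL H (a, b) = secT H (a, b) := by
  subst hb
  rcases lt_or_ge a (1/2) with h | h
  · have hθL : thL (a, 1-a) = 3/4 := by
      show (7/2 - (max a (min (1-a) (1 - a)) - 1/2) / (1 - 2*a))/4 = 3/4
      rw [min_self, max_eq_right (by linarith : a ≤ 1-a),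
        show ((1-a) - 1/2) / (1 - 2*a) = 1/2 from by
          rw [div_eq_iff (show (1:ℝ) - 2*a ≠ 0 from by intro hh; linarith)]; ring]
      norm_num
    have hθT : thT (a, 1-a) = 3/4 := by
      show (5/2 - (max (1-(1-a)) (min a (1-a)) - 1/2) / (2*(1-a) - 1))/4 = 3/4
      rw [show (1:ℝ) - (1-a) = a from by ring, min_eq_left (by linarith : a ≤ 1-a), max_self,
        show (a - 1/2) / (2*(1-a) - 1) = -(1/2) from by
          rw [div_eq_iff (show (2:ℝ)*(1-a) - 1 ≠ 0 from by intro hh; linarith)]; ring]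
      norm_num
    show Hr H (thL (a, 1-a)) (2*a) = Hr H (thT (a, 1-a)) (2-2*(1-a))
    rw [hθL, hθT, show (2:ℝ)-2*(1-a) = 2*a from by ring]
  · show Hr H (thL (a, 1-a)) (2*a) = Hr H (thT (a, 1-a)) (2-2*(1-a))
    rw [Hr_top H x₀ htop (by linarith), Hr_top H x₀ htop (by linarith)]

lemma eqBL (htop : ∀ t, H (t, 1) = x₀) (hlr : ∀ s, H (0, s) = H (1, s)) {a : ℝ}
    (h : a ≤ 1/2) : secB H (a, a) = secL H (a, a) := by
  rcases h.lt_or_eq with h' | h'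
  · have hθB : thB (a, a) = 0 := by
      show (1/2 + (max a (min a (1 - a)) - 1/2) / (1 - 2*a))/4 = 0
      rw [min_eq_left (by linarith : a ≤ 1-a), max_self,
        show (a - 1/2) / (1 - 2*a) = -(1/2) from by
          rw [div_eq_iff (show (1:ℝ) - 2*a ≠ 0 from by intro hh; linarith)]; ring]
      norm_num
    have hθL : thL (a, a) = 1 := by
      show (7/2 - (max a (min a (1 - a)) - 1/2) / (1 - 2*a))/4 = 1
      rw [min_eq_left (by linarith : a ≤ 1-a), max_self,
        show (a - 1/2) / (1 - 2*a) = -(1/2) from by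
          rw [div_eq_iff (show (1:ℝ) - 2*a ≠ 0 from by intro hh; linarith)]; ring]
      norm_num
    show Hr H (thB (a, a)) (2*a) = Hr H (thL (a, a)) (2*a)
    rw [hθB, hθL]
    exact Hr_lr H hlr _
  · subst h'
    show Hr H (thB (1/2, 1/2)) (2*(1/2)) = Hr H (thL (1/2, 1/2)) (2*(1/2))
    rw [Hr_top H x₀ htop (by norm_num), Hr_top H x₀ htop (by norm_num)]

lemma eqRT (htop : ∀ t, H (t, 1) = x₀) {a : ℝ} (h : 1/2 < a) :
    secR H (a, a) = secT H (a, a) := by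
  have hθR : thR (a, a) = 1/2 := by
    show (3/2 + (max (1-a) (min a a) - 1/2) / (2*a - 1))/4 = 1/2
    rw [min_self, max_eq_right (by linarith : 1-a ≤ a),
      show (a - 1/2) / (2*a - 1) = 1/2 from by
        rw [div_eq_iff (show (2:ℝ)*a - 1 ≠ 0 from by intro hh; linarith)]; ring]
    norm_num
  have hθT : thT (a, a) = 1/2 := by
    show (5/2 - (max (1-a) (min a a) - 1/2) / (2*a - 1))/4 = 1/2
    rw [min_self, max_eq_right (by linarith : 1-a ≤ a),
      show (a - 1/2) / (2*a - 1) = 1/2 from by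
        rw [div_eq_iff (show (2:ℝ)*a - 1 ≠ 0 from by intro hh; linarith)]; ring]
    norm_num
  show Hr H (thR (a, a)) (2-2*a) = Hr H (thT (a, a)) (2-2*a)
  rw [hθR, hθT]

end EqLemmas

section Fill

variable (H : C(unitInterval × unitInterval, X)) (x₀ : X)

lemma cl2_mem (p : ℝ × ℝ) : 0 ≤ (cl2 p).1 ∧ (cl2 p).1 ≤ 1 ∧ 0 ≤ (cl2 p).2 ∧ (cl2 p).2 ≤ 1 :=
  ⟨le_max_left _ _, max_le zero_le_one (min_le_left _ _),
   le_max_left _ _, max_le zero_le_one (min_le_left _ _)⟩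

lemma fillFun_continuous (htop : ∀ t, H (t, 1) = x₀) (hlr : ∀ s, H (0, s) = H (1, s)) :
    Continuous (fillFun H) := by
  have hcl : Continuous cl2 := by
    unfold cl2; fun_prop
  have hc1 : Continuous fun p : ℝ × ℝ => (cl2 p).1 := continuous_fst.comp hcl
  have hc2 : Continuous fun p : ℝ × ℝ => (cl2 p).2 := continuous_snd.comp hcl
  have h1 : Continuous fun p : ℝ × ℝ =>
      if (cl2 p).2 ≤ 1 - (cl2 p).1 then secB H (cl2 p) else secR H (cl2 p) := by
    refine Continuous.if_le ((secB_cont H x₀ htop).comp hcl) ((secR_cont H x₀ htop).comp hcl)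
      hc2 (continuous_const.sub hc1) ?_
    intro p hp
    exact eqBR H x₀ htop hp
  have h2 : Continuous fun p : ℝ × ℝ =>
      if (cl2 p).2 ≤ 1 - (cl2 p).1 then secL H (cl2 p) else secT H (cl2 p) := by
    refine Continuous.if_le ((secL_cont H x₀ htop).comp hcl) ((secT_cont H x₀ htop).comp hcl)
      hc2 (continuous_const.sub hc1) ?_
    intro p hp
    exact eqLT H x₀ htop hp
  refine Continuous.if_le h1 h2 hc2 hc1 ?_
  intro p hp
  have hpp : cl2 p = ((cl2 p).1, (cl2 p).1) := Prod.ext_iff.mpr ⟨rfl, hp⟩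
  by_cases h : (cl2 p).2 ≤ 1 - (cl2 p).1
  · rw [if_pos h, if_pos h, hpp]
    exact eqBL H x₀ htop hlr (by rw [hp] at h; linarith)
  · rw [if_neg h, if_neg h, hpp]
    exact eqRT H x₀ htop (by rw [hp] at h; push_neg at h; linarith)

lemma fillFun_mem (p : ℝ × ℝ) : fillFun H p ∈ Set.range H := by
  unfold fillFun
  split_ifs <;> exact Set.mem_range_self _

lemma fillFun_bottom {u : ℝ} (hu0 : 0 ≤ u) (hu1 : u ≤ 1) :
    fillFun H (u, 0) = Hr H (u/4) 0 := by
  have hcl : cl2 (u, 0) = (u, 0) := by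
    unfold cl2
    simp [min_eq_right hu1, max_eq_right hu0]
  unfold fillFun
  rw [hcl, if_pos (show ((u, (0:ℝ))).2 ≤ ((u, (0:ℝ))).1 from hu0),
    if_pos (show ((u, (0:ℝ))).2 ≤ 1 - ((u, (0:ℝ))).1 from by simp; linarith)]
  show Hr H (thB (u, 0)) (2*0) = Hr H (u/4) 0
  have hθ : thB (u, 0) = u/4 := by
    show (1/2 + (max 0 (min u (1 - 0)) - 1/2) / (1 - 2*0))/4 = u/4
    rw [show (1:ℝ) - 0 = 1 from by ring, min_eq_left hu1, max_eq_right hu0,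
      show (1:ℝ) - 2*0 = 1 from by ring, div_one]
    ring
  rw [hθ, mul_zero]

lemma fillFun_right {v : ℝ} (hv0 : 0 ≤ v) (hv1 : v ≤ 1) :
    fillFun H (1, v) = Hr H ((1+v)/4) 0 := by
  have hcl : cl2 (1, v) = (1, v) := by
    unfold cl2
    simp [min_eq_right hv1, max_eq_right hv0]
  unfold fillFun
  rw [hcl, if_pos (show ((1:ℝ), v).2 ≤ ((1:ℝ), v).1 from hv1)]
  rcases hv0.lt_or_eq with h | h
  · rw [if_neg (show ¬ ((1:ℝ), v).2 ≤ 1 - ((1:ℝ), v).1 from by simp; linarith)]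
    show Hr H (thR (1, v)) (2 - 2*1) = Hr H ((1+v)/4) 0
    have hθ : thR (1, v) = (1+v)/4 := by
      show (3/2 + (max (1-1) (min v 1) - 1/2) / (2*1 - 1))/4 = (1+v)/4
      rw [show (1:ℝ) - 1 = 0 from by ring, min_eq_left hv1, max_eq_right hv0,
        show (2:ℝ)*1 - 1 = 1 from by ring, div_one]
      ring
    rw [hθ, show (2:ℝ) - 2*1 = 0 from by ring]
  · rw [if_pos (show ((1:ℝ), v).2 ≤ 1 - ((1:ℝ), v).1 from by simp [← h])]
    show Hr H (thB (1, v)) (2*v) = Hr H ((1+v)/4) 0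
    have hθ : thB (1, v) = (1+v)/4 := by
      rw [← h]
      show (1/2 + (max 0 (min 1 (1 - 0)) - 1/2) / (1 - 2*0))/4 = (1+0)/4
      norm_num
    rw [hθ, ← h, mul_zero]

lemma fillFun_top {u : ℝ} (hu0 : 0 ≤ u) (hu1 : u ≤ 1) :
    fillFun H (u, 1) = Hr H ((3-u)/4) 0 := by
  have hcl : cl2 (u, 1) = (u, 1) := by
    unfold cl2
    simp [min_eq_right hu1, max_eq_right hu0]
  unfold fillFun
  rw [hcl]
  rcases hu1.lt_or_eq with h | h
  · rw [if_neg (show ¬ (u, (1:ℝ)).2 ≤ (u, (1:ℝ)).1 from by simp; linarith)]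
    rcases hu0.lt_or_eq with h0 | h0
    · rw [if_neg (show ¬ (u, (1:ℝ)).2 ≤ 1 - (u, (1:ℝ)).1 from by simp; linarith)]
      show Hr H (thT (u, 1)) (2 - 2*1) = Hr H ((3-u)/4) 0
      have hθ : thT (u, 1) = (3-u)/4 := by
        show (5/2 - (max (1-1) (min u 1) - 1/2) / (2*1 - 1))/4 = (3-u)/4
        rw [show (1:ℝ) - 1 = 0 from by ring, min_eq_left hu1, max_eq_right hu0,
          show (2:ℝ)*1 - 1 = 1 from by ring, div_one]
        ring
      rw [hθ, show (2:ℝ) - 2*1 = 0 from by ring]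
    · rw [if_pos (show (u, (1:ℝ)).2 ≤ 1 - (u, (1:ℝ)).1 from by simp [← h0])]
      show Hr H (thL (u, 1)) (2*u) = Hr H ((3-u)/4) 0
      have hθ : thL (u, 1) = (3-u)/4 := by
        rw [← h0]
        show (7/2 - (max 0 (min 1 (1 - 0)) - 1/2) / (1 - 2*0))/4 = (3-0)/4
        norm_num
      rw [hθ, ← h0, mul_zero]
  · rw [if_pos (show (u, (1:ℝ)).2 ≤ (u, (1:ℝ)).1 from by simp [h]),
      if_neg (show ¬ (u, (1:ℝ)).2 ≤ 1 - (u, (1:ℝ)).1 from by simp [h])]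
    show Hr H (thR (u, 1)) (2 - 2*u) = Hr H ((3-u)/4) 0
    have hθ : thR (u, 1) = (3-u)/4 := by
      rw [h]
      show (3/2 + (max (1-1) (min 1 1) - 1/2) / (2*1 - 1))/4 = (3-1)/4
      norm_num
    rw [hθ, h, show (2:ℝ) - 2*1 = 0 from by ring]

lemma fillFun_left (hlr : ∀ s, H (0, s) = H (1, s)) {v : ℝ} (hv0 : 0 ≤ v) (hv1 : v ≤ 1) :
    fillFun H (0, v) = Hr H ((4-v)/4) 0 := by
  have hcl : cl2 (0, v) = (0, v) := by
    unfold cl2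
    simp [min_eq_right hv1, max_eq_right hv0]
  unfold fillFun
  rw [hcl]
  rcases hv0.lt_or_eq with h | h
  · rw [if_neg (show ¬ ((0:ℝ), v).2 ≤ ((0:ℝ), v).1 from by simp; linarith),
      if_pos (show ((0:ℝ), v).2 ≤ 1 - ((0:ℝ), v).1 from by simp; linarith)]
    show Hr H (thL (0, v)) (2*0) = Hr H ((4-v)/4) 0
    have hθ : thL (0, v) = (4-v)/4 := by
      show (7/2 - (max 0 (min v (1 - 0)) - 1/2) / (1 - 2*0))/4 = (4-v)/4
      rw [show (1:ℝ) - 0 = 1 from by ring, min_eq_left hv1, max_eq_right hv0,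
        show (1:ℝ) - 2*0 = 1 from by ring, div_one]
      ring
    rw [hθ, mul_zero]
  · rw [if_pos (show ((0:ℝ), v).2 ≤ ((0:ℝ), v).1 from by simp [← h]),
      if_pos (show ((0:ℝ), v).2 ≤ 1 - ((0:ℝ), v).1 from by simp [← h])]
    show Hr H (thB (0, v)) (2*v) = Hr H ((4-v)/4) 0
    have hθ : thB (0, v) = 0 := by
      rw [← h]
      show (1/2 + (max 0 (min 0 (1 - 0)) - 1/2) / (1 - 2*0))/4 = 0
      norm_num
    rw [hθ, ← h, mul_zero, show ((4:ℝ)-0)/4 = 1 from by norm_num]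
    exact Hr_lr H hlr 0

end Fill

lemma fillSquare (H : C(unitInterval × unitInterval, X)) (x₀ : X)
    (htop : ∀ t, H (t, 1) = x₀) (hlr : ∀ s, H (0, s) = H (1, s)) :
    ∃ F : C(unitInterval × unitInterval, X),
      (∀ u : unitInterval, F (u, 0) = H (Q01 ((u:ℝ)/4), 0)) ∧
      (∀ u : unitInterval, F (u, 1) = H (Q01 ((3-(u:ℝ))/4), 0)) ∧
      (∀ v : unitInterval, F (0, v) = H (Q01 ((4-(v:ℝ))/4), 0)) ∧
      (∀ v : unitInterval, F (1, v) = H (Q01 ((1+(v:ℝ))/4), 0)) ∧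
      Set.range F ⊆ Set.range H := by
  have hcont : Continuous fun p : unitInterval × unitInterval => fillFun H ((p.1 : ℝ), (p.2 : ℝ)) := by
    exact (fillFun_continuous H x₀ htop hlr).comp
      ((continuous_subtype_val.comp continuous_fst).prodMk (continuous_subtype_val.comp continuous_snd))
  refine ⟨⟨fun p => fillFun H ((p.1 : ℝ), (p.2 : ℝ)), hcont⟩, ?_, ?_, ?_, ?_, ?_⟩
  · intro u
    have h0 : ((0 : unitInterval) : ℝ) = 0 := rfl
    show fillFun H ((u:ℝ), ((0:unitInterval):ℝ)) = _
    rw [h0, fillFun_bottom H u.2.1 u.2.2]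
    rw [Hr, Q01_of_nonpos le_rfl]
  · intro u
    show fillFun H ((u:ℝ), ((1:unitInterval):ℝ)) = _
    rw [show ((1 : unitInterval) : ℝ) = 1 from rfl, fillFun_top H u.2.1 u.2.2]
    rw [Hr, Q01_of_nonpos le_rfl]
  · intro v
    show fillFun H (((0:unitInterval):ℝ), (v:ℝ)) = _
    rw [show ((0 : unitInterval) : ℝ) = 0 from rfl, fillFun_left H hlr v.2.1 v.2.2]
    rw [Hr, Q01_of_nonpos le_rfl]
  · intro v
    show fillFun H (((1:unitInterval):ℝ), (v:ℝ)) = _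
    rw [show ((1 : unitInterval) : ℝ) = 1 from rfl, fillFun_right H v.2.1 v.2.2]
    rw [Hr, Q01_of_nonpos le_rfl]
  · rintro z ⟨p, rfl⟩
    exact fillFun_mem H _

section Rect

variable (bot top lft rgt : C(unitInterval, X))

def loopFun : ℝ → X := fun a =>
  if a ≤ 1/4 then bot (Q01 (4*a))
  else if a ≤ 1/2 then rgt (Q01 (4*a-1))
  else if a ≤ 3/4 then top (Q01 (3-4*a))
  else lft (Q01 (4-4*a))

lemma loopFun_continuous (hbr : bot 1 = rgt 0) (htl : top 0 = lft 1) (htr : top 1 = rgt 1) :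
    Continuous (loopFun bot top lft rgt) := by
  have c0 : Continuous fun a : ℝ => bot (Q01 (4*a)) := by
    exact bot.continuous.comp (Q01_continuous.comp (by fun_prop))
  have c1 : Continuous fun a : ℝ => rgt (Q01 (4*a-1)) := by
    exact rgt.continuous.comp (Q01_continuous.comp (by fun_prop))
  have c2 : Continuous fun a : ℝ => top (Q01 (3-4*a)) := by
    exact top.continuous.comp (Q01_continuous.comp (by fun_prop))
  have c3 : Continuous fun a : ℝ => lft (Q01 (4-4*a)) := by
    exact lft.continuous.comp (Q01_continuous.comp (by fun_prop))
  have h23 : Continuous fun a : ℝ => if a ≤ 3/4 then top (Q01 (3-4*a)) else lft (Q01 (4-4*a)) := by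
    refine Continuous.if_le c2 c3 continuous_id continuous_const ?_
    intro a ha
    rw [ha]
    rw [show (3:ℝ)-4*(3/4) = 0 from by norm_num, show (4:ℝ)-4*(3/4) = 1 from by norm_num,
      Q01_of_nonpos le_rfl, Q01_of_one_le le_rfl, htl]
  have h123 : Continuous fun a : ℝ => if a ≤ 1/2 then rgt (Q01 (4*a-1))
      else if a ≤ 3/4 then top (Q01 (3-4*a)) else lft (Q01 (4-4*a)) := by
    refine Continuous.if_le c1 h23 continuous_id continuous_const ?_
    intro a ha
    rw [ha]
    rw [if_pos (show (1:ℝ)/2 ≤ 3/4 from by norm_num),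
      show (4:ℝ)*(1/2)-1 = 1 from by norm_num, show (3:ℝ)-4*(1/2) = 1 from by norm_num,
      Q01_of_one_le le_rfl]
    exact htr.symm
  refine Continuous.if_le c0 h123 continuous_id continuous_const ?_
  intro a ha
  rw [ha]
  rw [if_pos (show (1:ℝ)/4 ≤ 1/2 from by norm_num),
    show (4:ℝ)*(1/4)-1 = 0 from by norm_num, show (4:ℝ)*(1/4) = 1 from by norm_num,
    Q01_of_one_le le_rfl, Q01_of_nonpos le_rfl, hbr]

lemma rectFill (hbl : bot 0 = lft 0) (hbr : bot 1 = rgt 0) (htl : top 0 = lft 1)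
    (htr : top 1 = rgt 1) :
    ∃ Λ : C(unitInterval, X), Λ 0 = Λ 1 ∧
      Set.range Λ ⊆ Set.range bot ∪ Set.range rgt ∪ Set.range top ∪ Set.range lft ∧
      ∀ S : Set X, LoopContractibleIn Λ S →
        ∃ F : C(unitInterval × unitInterval, X),
          (∀ u, F (u, 0) = bot u) ∧ (∀ u, F (u, 1) = top u) ∧
          (∀ v, F (0, v) = lft v) ∧ (∀ v, F (1, v) = rgt v) ∧ Set.range F ⊆ S := by
  set Λf := loopFun bot top lft rgt with hΛf
  have hcont : Continuous fun t : unitInterval => Λf ↑t :=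
    (loopFun_continuous bot top lft rgt hbr htl htr).comp continuous_subtype_val
  set Λ : C(unitInterval, X) := ⟨fun t => Λf ↑t, hcont⟩ with hΛ
  have ev1 : ∀ u : unitInterval, Λ (Q01 ((u:ℝ)/4)) = bot u := by
    intro u
    have hco : ((Q01 ((u:ℝ)/4) : unitInterval) : ℝ) = (u:ℝ)/4 :=
      Q01_coe (by linarith [u.2.1]) (by linarith [u.2.2])
    show Λf ((Q01 ((u:ℝ)/4) : unitInterval) : ℝ) = bot u
    rw [hco]
    simp only [hΛf, loopFun]
    rw [if_pos (show (u:ℝ)/4 ≤ 1/4 from by linarith [u.2.2]),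
      show (4:ℝ)*((u:ℝ)/4) = (u:ℝ) from by ring, Q01_val]
  have ev2 : ∀ u : unitInterval, Λ (Q01 ((3-(u:ℝ))/4)) = top u := by
    intro u
    have hco : ((Q01 ((3-(u:ℝ))/4) : unitInterval) : ℝ) = (3-(u:ℝ))/4 :=
      Q01_coe (by linarith [u.2.2]) (by linarith [u.2.1])
    show Λf ((Q01 ((3-(u:ℝ))/4) : unitInterval) : ℝ) = top u
    rw [hco]
    simp only [hΛf, loopFun]
    rcases u.2.2.lt_or_eq with h | h
    · rw [if_neg (show ¬ (3-(u:ℝ))/4 ≤ 1/4 from by push_neg; linarith),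
        if_neg (show ¬ (3-(u:ℝ))/4 ≤ 1/2 from by push_neg; linarith),
        if_pos (show (3-(u:ℝ))/4 ≤ 3/4 from by linarith [u.2.1]),
        show (3:ℝ)-4*((3-(u:ℝ))/4) = (u:ℝ) from by ring, Q01_val]
    · rw [if_neg (show ¬ (3-(u:ℝ))/4 ≤ 1/4 from by push_neg; linarith),
        if_pos (show (3-(u:ℝ))/4 ≤ 1/2 from by linarith),
        show (4:ℝ)*((3-(u:ℝ))/4)-1 = 2 - (u:ℝ) from by ring, h,
        show (2:ℝ) - 1 = 1 from by norm_num, Q01_of_one_le le_rfl, ← htr]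
      congr 1
      exact Subtype.ext h.symm
  have ev3 : ∀ v : unitInterval, Λ (Q01 ((4-(v:ℝ))/4)) = lft v := by
    intro v
    have hco : ((Q01 ((4-(v:ℝ))/4) : unitInterval) : ℝ) = (4-(v:ℝ))/4 :=
      Q01_coe (by linarith [v.2.2]) (by linarith [v.2.1])
    show Λf ((Q01 ((4-(v:ℝ))/4) : unitInterval) : ℝ) = lft v
    rw [hco]
    simp only [hΛf, loopFun]
    rcases v.2.2.lt_or_eq with h | h
    · rw [if_neg (show ¬ (4-(v:ℝ))/4 ≤ 1/4 from by push_neg; linarith),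
        if_neg (show ¬ (4-(v:ℝ))/4 ≤ 1/2 from by push_neg; linarith),
        if_neg (show ¬ (4-(v:ℝ))/4 ≤ 3/4 from by push_neg; linarith),
        show (4:ℝ)-4*((4-(v:ℝ))/4) = (v:ℝ) from by ring, Q01_val]
    · rw [if_neg (show ¬ (4-(v:ℝ))/4 ≤ 1/4 from by push_neg; linarith),
        if_neg (show ¬ (4-(v:ℝ))/4 ≤ 1/2 from by push_neg; linarith),
        if_pos (show (4-(v:ℝ))/4 ≤ 3/4 from by linarith),
        show (3:ℝ)-4*((4-(v:ℝ))/4) = (v:ℝ) - 1 from by ring, h,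
        show (1:ℝ) - 1 = 0 from by norm_num, Q01_of_nonpos le_rfl, htl]
      congr 1
      exact Subtype.ext h.symm
  have ev4 : ∀ v : unitInterval, Λ (Q01 ((1+(v:ℝ))/4)) = rgt v := by
    intro v
    have hco : ((Q01 ((1+(v:ℝ))/4) : unitInterval) : ℝ) = (1+(v:ℝ))/4 :=
      Q01_coe (by linarith [v.2.1]) (by linarith [v.2.2])
    show Λf ((Q01 ((1+(v:ℝ))/4) : unitInterval) : ℝ) = rgt v
    rw [hco]
    simp only [hΛf, loopFun]
    rcases v.2.1.lt_or_eq with h | h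
    · rw [if_neg (show ¬ (1+(v:ℝ))/4 ≤ 1/4 from by push_neg; linarith),
        if_pos (show (1+(v:ℝ))/4 ≤ 1/2 from by linarith [v.2.2]),
        show (4:ℝ)*((1+(v:ℝ))/4)-1 = (v:ℝ) from by ring, Q01_val]
    · rw [if_pos (show (1+(v:ℝ))/4 ≤ 1/4 from by linarith),
        show (4:ℝ)*((1+(v:ℝ))/4) = 1 + (v:ℝ) from by ring, ← h,
        show (1:ℝ) + 0 = 1 from by norm_num, Q01_of_one_le le_rfl, hbr]
      congr 1
      exact Subtype.ext h
  refine ⟨Λ, ?_, ?_, ?_⟩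
  · show Λf ((0 : unitInterval) : ℝ) = Λf ((1 : unitInterval) : ℝ)
    rw [show ((0 : unitInterval) : ℝ) = 0 from rfl, show ((1 : unitInterval) : ℝ) = 1 from rfl,
      ]
    simp only [hΛf, loopFun]
    rw [if_pos (show (0:ℝ) ≤ 1/4 from by norm_num),
      if_neg (show ¬ (1:ℝ) ≤ 1/4 from by norm_num),
      if_neg (show ¬ (1:ℝ) ≤ 1/2 from by norm_num),
      if_neg (show ¬ (1:ℝ) ≤ 3/4 from by norm_num),
      show (4:ℝ)*0 = 0 from by norm_num, show (4:ℝ)-4*1 = 0 from by norm_num,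
      Q01_of_nonpos le_rfl, hbl]
  · rintro z ⟨t, rfl⟩
    show Λf ↑t ∈ _
    simp only [hΛf, loopFun]
    split_ifs
    · exact Or.inl (Or.inl (Or.inl (Set.mem_range_self _)))
    · exact Or.inl (Or.inl (Or.inr (Set.mem_range_self _)))
    · exact Or.inl (Or.inr (Set.mem_range_self _))
    · exact Or.inr (Set.mem_range_self _)
  · rintro S ⟨K, x₀, hK0, hK1, hKlr, hKrange⟩
    obtain ⟨F, hF1, hF2, hF3, hF4, hFr⟩ := fillSquare K x₀ hK1 hKlr
    refine ⟨F, ?_, ?_, ?_, ?_, hFr.trans hKrange⟩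
    · intro u; rw [hF1 u, hK0, ev1]
    · intro u; rw [hF2 u, hK0, ev2]
    · intro v; rw [hF3 v, hK0, ev3]
    · intro v; rw [hF4 v, hK0, ev4]

end Rect






lemma exists_path_near {Y : Type} [MetricSpace Y] (hY : IsLengthSpace Y) (a b : Y)
    {η : ℝ} (hη : 0 < η) :
    ∃ γ : C(unitInterval, Y), γ 0 = a ∧ γ 1 = b ∧
      ∀ s, dist (γ s) a ≤ dist a b + η ∧ dist (γ s) b ≤ dist a b + η := by
  have hlt : ⨅ γ : Path a b, eVariationOn (fun t : ℝ => γ.extend t) (Set.Icc 0 1)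
      < edist a b + ENNReal.ofReal η := by
    rw [← hY a b]
    exact ENNReal.lt_add_right (edist_ne_top a b) (by simp [ENNReal.ofReal_pos, hη])
  obtain ⟨γ, hγ⟩ := iInf_lt_iff.1 hlt
  have hvar : eVariationOn (fun t : ℝ => γ.extend t) (Set.Icc 0 1)
      ≤ ENNReal.ofReal (dist a b + η) := by
    refine hγ.le.trans ?_
    rw [edist_dist, ← ENNReal.ofReal_add dist_nonneg hη.le]
  refine ⟨⟨fun s => γ s, γ.continuous⟩, γ.source, γ.target, ?_⟩
  intro s
  constructor
  · have h1 := eVariationOn.edist_le (fun t : ℝ => γ.extend t)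
      (show ((s:ℝ)) ∈ Set.Icc (0:ℝ) 1 from ⟨s.2.1, s.2.2⟩)
      (show (0:ℝ) ∈ Set.Icc (0:ℝ) 1 from ⟨le_rfl, zero_le_one⟩)
    rw [γ.extend_extends' s, γ.extend_zero] at h1
    have h2 := h1.trans hvar
    exact (edist_le_ofReal (by positivity)).1 h2
  · have h1 := eVariationOn.edist_le (fun t : ℝ => γ.extend t)
      (show ((s:ℝ)) ∈ Set.Icc (0:ℝ) 1 from ⟨s.2.1, s.2.2⟩)
      (show (1:ℝ) ∈ Set.Icc (0:ℝ) 1 from ⟨zero_le_one, le_rfl⟩)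
    rw [γ.extend_extends' s, γ.extend_one] at h1
    have h2 := h1.trans hvar
    exact (edist_le_ofReal (by positivity)).1 h2

lemma exists_near_point {Y : Type} [MetricSpace Y] (hY : IsLengthSpace Y) (p x : Y)
    {r η : ℝ} (hr : 0 < r) (hη : 0 < η) (hrd : r ≤ dist p x) :
    ∃ q : Y, dist q p ≤ r + η ∧ dist q x ≤ dist p x - r + η := by
  have hlt : ⨅ γ : Path p x, eVariationOn (fun t : ℝ => γ.extend t) (Set.Icc 0 1)
      < edist p x + ENNReal.ofReal (η/2) := by
    rw [← hY p x]
    exact ENNReal.lt_add_right (edist_ne_top p x) (by simp [ENNReal.ofReal_pos]; positivity)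
  obtain ⟨γ, hγ⟩ := iInf_lt_iff.1 hlt
  have hvar : eVariationOn (fun t : ℝ => γ.extend t) (Set.Icc 0 1)
      ≤ ENNReal.ofReal (dist p x + η/2) := by
    refine hγ.le.trans ?_
    rw [edist_dist, ← ENNReal.ofReal_add dist_nonneg (by positivity)]
  have hext : ∀ t : ℝ, γ.extend t = γ (Q01 t) := fun t => rfl
  have huc := CompactSpace.uniformContinuous_of_continuous γ.continuous
  rw [Metric.uniformContinuous_iff] at huc
  obtain ⟨δ, hδ0, hδ⟩ := huc (η/2) (by positivity)
  obtain ⟨m, hm⟩ := exists_nat_one_div_lt hδ0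
  set M : ℕ := m + 1 with hM
  have hM0 : (0:ℝ) < (M:ℝ) := by positivity
  set w : ℕ → Y := fun k => γ (Q01 ((k:ℝ) / (M:ℝ))) with hw
  have hQd : ∀ c d : ℝ, dist (Q01 c) (Q01 d) ≤ dist c d := by
    intro c d
    have := (LipschitzWith.projIcc (a := (0:ℝ)) (b := 1) zero_le_one).dist_le_mul c d
    simpa [Q01] using this
  have hstep : ∀ k : ℕ, dist (w k) (w (k+1)) ≤ η/2 := by
    intro k
    have hdd : dist ((k:ℝ)/(M:ℝ)) (((k+1:ℕ):ℝ)/(M:ℝ)) = 1/(M:ℝ) := by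
      rw [Real.dist_eq, show (k:ℝ)/(M:ℝ) - ((k+1:ℕ):ℝ)/(M:ℝ) = -(1/(M:ℝ)) from by push_cast; ring,
        abs_neg, abs_of_nonneg (by positivity)]
    have hlt' : dist (Q01 ((k:ℝ)/(M:ℝ))) (Q01 (((k+1:ℕ):ℝ)/(M:ℝ))) < δ := by
      refine lt_of_le_of_lt (hQd _ _) ?_
      rw [hdd]
      have : (1:ℝ)/(M:ℝ) = 1/((m:ℝ)+1) := by rw [hM]; push_cast; ring_nf
      rw [this]; exact hm
    exact (hδ hlt').le
  set s : ℕ → ℝ := fun k => ∑ i ∈ Finset.range k, dist (w i) (w (i+1)) with hs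
  have hd0k : ∀ k, dist (w 0) (w k) ≤ s k := fun k => dist_le_range_sum_dist w k
  have hdkM : ∀ k, k ≤ M → dist (w k) (w M) ≤ s M - s k := by
    intro k hk
    have h2 := dist_le_Ico_sum_dist w hk
    rwa [Finset.sum_Ico_eq_sub _ hk] at h2
  have hsM : s M ≤ dist p x + η/2 := by
    set u : ℕ → ℝ := fun j => min ((j:ℝ)/(M:ℝ)) 1 with hu
    have humono : Monotone u := by
      intro i j hij
      exact min_le_min (by gcongr) le_rfl
    have hus : ∀ j, u j ∈ Set.Icc (0:ℝ) 1 := by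
      intro j
      exact ⟨le_min (by positivity) zero_le_one, min_le_right _ _⟩
    have hsum := eVariationOn.sum_le (f := fun t : ℝ => γ.extend t) (n := M) humono hus
    have hterm : ∀ i ∈ Finset.range M,
        edist ((fun t : ℝ => γ.extend t) (u (i+1))) ((fun t : ℝ => γ.extend t) (u i))
          = ENNReal.ofReal (dist (w i) (w (i+1))) := by
      intro i hi
      have hiM : i < M := Finset.mem_range.1 hi
      have hu1 : u i = (i:ℝ)/(M:ℝ) := min_eq_left (by
        rw [div_le_one hM0]; exact_mod_cast hiM.le)
      have hu2 : u (i+1) = ((i+1:ℕ):ℝ)/(M:ℝ) := min_eq_left (by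
        rw [div_le_one hM0]; exact_mod_cast hiM)
      simp only
      rw [hu1, hu2, hext, hext, edist_comm, edist_dist]
    rw [Finset.sum_congr rfl hterm] at hsum
    rw [← ENNReal.ofReal_sum_of_nonneg (fun i _ => dist_nonneg)] at hsum
    have := hsum.trans hvar
    rwa [ENNReal.ofReal_le_ofReal_iff (by positivity)] at this
  have hw0 : w 0 = p := by
    have : ((0:ℕ):ℝ)/(M:ℝ) = 0 := by norm_num
    rw [hw]; simp only; rw [this, show Q01 0 = 0 from by rw [Q01, projIcc_of_le_left _ le_rfl]; rfl]
    exact γ.source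
  have hwM : w M = x := by
    have : ((M:ℕ):ℝ)/(M:ℝ) = 1 := div_self hM0.ne'
    rw [hw]; simp only; rw [this, show Q01 1 = 1 from by rw [Q01, projIcc_of_right_le _ le_rfl]; rfl]
    exact γ.target
  have hdpx : dist p x ≤ s M := by
    have := hd0k M
    rwa [hw0, hwM] at this
  have hex : ∃ k, r ≤ s k := ⟨M, hrd.trans hdpx⟩
  set k₀ := Nat.find hex with hk₀
  have hk₀r : r ≤ s k₀ := Nat.find_spec hex
  have hk₀M : k₀ ≤ M := Nat.find_min' hex (hrd.trans hdpx)
  have hk₀0 : k₀ ≠ 0 := by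
    intro h
    rw [h] at hk₀r
    have : s 0 = 0 := by rw [hs]; simp
    rw [this] at hk₀r
    linarith
  have hpos : 0 < k₀ := Nat.pos_of_ne_zero hk₀0
  have hprev : ¬ r ≤ s (k₀ - 1) := Nat.find_min hex (Nat.sub_lt hpos one_pos)
  push_neg at hprev
  have hkk : (k₀ - 1) + 1 = k₀ := by omega
  have h1 : s ((k₀-1)+1) = s (k₀-1) + dist (w (k₀-1)) (w ((k₀-1)+1)) := Finset.sum_range_succ _ _
  have hstep' := hstep (k₀-1)
  rw [hkk] at h1 hstep'
  have hsk₀ : s k₀ ≤ r + η/2 := by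
    rw [h1]
    linarith
  refine ⟨w k₀, ?_, ?_⟩
  · have := hd0k k₀
    rw [hw0] at this
    rw [dist_comm] at this
    linarith
  · have := hdkM k₀ hk₀M
    rw [hwM] at this
    linarith

end Stmt4Aux

/-- with `ε₀ = T/20`, under local `1`-contractibility of `X` at scale `T`,
any two loops of `X` that are `5ε₀`-close to a common loop `c` in `B_1(y)` are freely
homotopic within `B_2(x)`. -/
theorem stmt4 (T : ℝ) (hT0 : 0 < T) (hT1 : T < 1)
    (X Y : Type) [MetricSpace X] [MetricSpace Y] (x : X) (y : Y)
    (hX : IsLengthSpace X) (hY : IsLengthSpace Y)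
    (hcomp : IsCompact (closure (Metric.ball x 2)))
    (f : X → Y) (hf : IsPointedGHApprox f x y (T / 20))
    (hcontr : ∀ q ∈ Metric.ball x 1, ∀ γ : C(unitInterval, X), γ 0 = γ 1 →
      Set.range γ ⊆ Metric.ball q T → LoopContractibleIn γ (Metric.ball q 1))
    (c : C(unitInterval, Y)) (hc : c 0 = c 1) (hcr : Set.range c ⊆ Metric.ball y 1)
    (c' c'' : C(unitInterval, X)) (h1 : c' 0 = c' 1) (h2 : c'' 0 = c'' 1)
    (hclose' : ∀ t, dist (f (c' t)) (c t) ≤ 5 * (T / 20))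
    (hclose'' : ∀ t, dist (f (c'' t)) (c t) ≤ 5 * (T / 20)) :
    ∃ H : C(unitInterval × unitInterval, X),
      (∀ t, H (t, 0) = c' t) ∧ (∀ t, H (t, 1) = c'' t) ∧
      (∀ s, H (0, s) = H (1, s)) ∧ Set.range H ⊆ Metric.ball x 2 := by
  set ε : ℝ := T / 20 with hε
  obtain ⟨hfy, hfdist, -⟩ := hf
  have hε0 : 0 < ε := by rw [hε]; linarith
  have hε20 : ε < 1/20 := by rw [hε]; linarith
  have hTε : T = 20*ε := by rw [hε]; ring
  -- pointwise closeness of the two lifted loops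
  have h11 : ∀ t, dist (c' t) (c'' t) ≤ 11*ε := by
    intro t
    have ha := hfdist (c' t) (c'' t)
    rw [abs_le] at ha
    have hb := dist_triangle (f (c' t)) (c t) (f (c'' t))
    have hcomm := dist_comm (c t) (f (c'' t))
    have h3 := hclose' t; have h4 := hclose'' t
    linarith
  -- the lifted loops stay within 1 + 7ε of x
  have hx' : ∀ t, dist (c' t) x < 1 + 7*ε := by
    intro t
    have ha := hfdist (c' t) x
    rw [abs_le] at ha
    have hyc : dist (c t) y < 1 := Metric.mem_ball.1 (hcr (Set.mem_range_self t))
    have hb := dist_triangle4 (f (c' t)) (c t) y (f x)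
    have hcomm := dist_comm y (f x)
    have h3 := hclose' t
    linarith
  have hx'' : ∀ t, dist (c'' t) x < 1 + 7*ε := by
    intro t
    have ha := hfdist (c'' t) x
    rw [abs_le] at ha
    have hyc : dist (c t) y < 1 := Metric.mem_ball.1 (hcr (Set.mem_range_self t))
    have hb := dist_triangle4 (f (c'' t)) (c t) y (f x)
    have hcomm := dist_comm y (f x)
    have h3 := hclose'' t
    linarith
  -- uniform continuity at scale 1/2^K
  obtain ⟨δ1, hδ1, hu1⟩ := Metric.uniformContinuous_iff.1
    (CompactSpace.uniformContinuous_of_continuous c'.continuous) ε hε0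
  obtain ⟨δ2, hδ2, hu2⟩ := Metric.uniformContinuous_iff.1
    (CompactSpace.uniformContinuous_of_continuous c''.continuous) ε hε0
  obtain ⟨K, hK⟩ : ∃ K : ℕ, (1:ℝ)/2^K < min δ1 δ2 := by
    obtain ⟨K, hK⟩ := exists_pow_lt_of_lt_one (lt_min hδ1 hδ2) (by norm_num : (1:ℝ)/2 < 1)
    exact ⟨K, by rwa [div_pow, one_pow] at hK⟩
  set N : ℕ := 2^K with hN
  have hNne : N ≠ 0 := (pow_pos (by norm_num : (0:ℕ) < 2) K).ne'
  have hN0 : (0:ℝ) < (N:ℝ) := by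
    have : 0 < N := Nat.pos_of_ne_zero hNne
    exact_mod_cast this
  have hNK : (N:ℝ) = 2^K := by rw [hN]; push_cast; ring
  have hmesh' : ∀ a b : unitInterval, |(a:ℝ) - (b:ℝ)| ≤ 1/(N:ℝ) → dist (c' a) (c' b) ≤ ε := by
    intro a b h
    have hab : dist a b < δ1 := by
      rw [Subtype.dist_eq, Real.dist_eq]
      calc |(a:ℝ) - (b:ℝ)| ≤ 1/(N:ℝ) := h
        _ < min δ1 δ2 := by rw [hNK]; exact hK
        _ ≤ δ1 := min_le_left _ _
    exact (hu1 hab).le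
  have hmesh'' : ∀ a b : unitInterval, |(a:ℝ) - (b:ℝ)| ≤ 1/(N:ℝ) → dist (c'' a) (c'' b) ≤ ε := by
    intro a b h
    have hab : dist a b < δ2 := by
      rw [Subtype.dist_eq, Real.dist_eq]
      calc |(a:ℝ) - (b:ℝ)| ≤ 1/(N:ℝ) := h
        _ < min δ1 δ2 := by rw [hNK]; exact hK
        _ ≤ δ2 := min_le_right _ _
    exact (hu2 hab).le
  have hQQ : ∀ a b : ℝ, |(Q01 a : ℝ) - (Q01 b : ℝ)| ≤ |a - b| := by
    intro a b
    have := Q01_dist_le a b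
    rwa [Subtype.dist_eq, Real.dist_eq, Real.dist_eq] at this
  set τ : ℕ → unitInterval := fun i => Q01 ((i:ℝ)/(N:ℝ)) with hτdef
  have hτi : ∀ i : ℕ, τ i = Q01 ((i:ℝ)/(N:ℝ)) := fun _ => rfl
  have hτ0 : τ 0 = 0 := by
    rw [hτi]
    norm_num
    exact Q01_of_nonpos le_rfl
  have hτN : τ N = 1 := by
    rw [hτi, div_self hN0.ne']
    exact Q01_of_one_le le_rfl
  have hmeshQ : ∀ (j : ℕ) (u : unitInterval),
      |(Q01 (((j:ℝ) + (u:ℝ))/(N:ℝ)) : ℝ) - ((τ j : unitInterval) : ℝ)| ≤ 1/(N:ℝ) := by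
    intro j u
    rw [hτi]
    refine (hQQ _ _).trans ?_
    rw [div_sub_div_same, add_sub_cancel_left, abs_of_nonneg (div_nonneg u.2.1 hN0.le)]
    have := u.2.2
    gcongr
  have hmeshτ : ∀ j : ℕ, |((τ (j+1) : unitInterval) : ℝ) - ((τ j : unitInterval) : ℝ)| ≤ 1/(N:ℝ) := by
    intro j
    rw [hτi, hτi]
    refine (hQQ _ _).trans ?_
    rw [div_sub_div_same]
    push_cast
    rw [add_sub_cancel_left, abs_of_nonneg (by positivity)]
  -- short paths between corresponding points
  have hσex : ∀ i : ℕ, ∃ γ : C(unitInterval, X), γ 0 = c' (τ i) ∧ γ 1 = c'' (τ i) ∧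
      ∀ s, dist (γ s) (c' (τ i)) ≤ 23/2*ε ∧ dist (γ s) (c'' (τ i)) ≤ 23/2*ε := by
    intro i
    obtain ⟨γ, hg0, hg1, hgb⟩ := exists_path_near hX (c' (τ i)) (c'' (τ i)) (half_pos hε0)
    refine ⟨γ, hg0, hg1, fun s => ?_⟩
    obtain ⟨hga, hgc⟩ := hgb s
    have := h11 (τ i)
    constructor <;> linarith
  choose sg hsg0 hsg1 hsgb using hσex
  set σ : ℕ → C(unitInterval, X) := fun i => if i = N then sg 0 else sg i with hσdef
  have hc'N : c' (τ N) = c' (τ 0) := by rw [hτ0, hτN, ← h1]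
  have hc''N : c'' (τ N) = c'' (τ 0) := by rw [hτ0, hτN, ← h2]
  have hσ0 : ∀ i, σ i 0 = c' (τ i) := by
    intro i
    show (if i = N then sg 0 else sg i) 0 = c' (τ i)
    by_cases h : i = N
    · rw [if_pos h, hsg0 0, h, hc'N]
    · rw [if_neg h, hsg0 i]
  have hσ1 : ∀ i, σ i 1 = c'' (τ i) := by
    intro i
    show (if i = N then sg 0 else sg i) 1 = c'' (τ i)
    by_cases h : i = N
    · rw [if_pos h, hsg1 0, h, hc''N]
    · rw [if_neg h, hsg1 i]
  have hσb : ∀ i s, dist (σ i s) (c' (τ i)) ≤ 23/2*ε ∧ dist (σ i s) (c'' (τ i)) ≤ 23/2*ε := by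
    intro i s
    show dist ((if i = N then sg 0 else sg i) s) (c' (τ i)) ≤ 23/2*ε
      ∧ dist ((if i = N then sg 0 else sg i) s) (c'' (τ i)) ≤ 23/2*ε
    by_cases h : i = N
    · rw [if_pos h, h, hc'N, hc''N]
      exact hsgb 0 s
    · rw [if_neg h]
      exact hsgb i s
  have hσN : σ N = σ 0 := by
    show (if N = N then sg 0 else sg N) = (if 0 = N then sg 0 else sg 0)
    rw [if_pos rfl]
    split_ifs <;> rfl
  -- base points for contractions
  have hqex : ∀ i : ℕ, ∃ q : X, dist q x < 1 ∧ dist q (c' (τ i)) ≤ 37/5*ε := by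
    intro i
    rcases lt_or_ge (dist (c' (τ i)) x) 1 with h | h
    · refine ⟨c' (τ i), h, ?_⟩
      rw [dist_self]
      positivity
    · obtain ⟨q, hq1, hq2⟩ := exists_near_point hX (c' (τ i)) x
        (r := 36/5*ε) (η := ε/5) (by linarith) (by linarith) (by linarith)
      have := hx' (τ i)
      exact ⟨q, by linarith, by linarith⟩
  choose q hq1 hq2 using hqex
  have hball12 : ∀ i : ℕ, Metric.ball (q i) 1 ⊆ Metric.ball x 2 := by
    intro i z hz
    rw [Metric.mem_ball] at hz ⊢
    have := hq1 i
    calc dist z x ≤ dist z (q i) + dist (q i) x := dist_triangle _ _ _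
      _ < 2 := by linarith
  -- fill each small rectangle
  have hrect : ∀ i : ℕ, ∃ F : C(unitInterval × unitInterval, X),
      (∀ u : unitInterval, F (u, 0) = c' (Q01 (((i:ℝ) + (u:ℝ))/(N:ℝ)))) ∧
      (∀ u : unitInterval, F (u, 1) = c'' (Q01 (((i:ℝ) + (u:ℝ))/(N:ℝ)))) ∧
      (∀ v, F (0, v) = σ i v) ∧ (∀ v, F (1, v) = σ (i+1) v) ∧
      Set.range F ⊆ Metric.ball x 2 := by
    intro i
    have hbm : Continuous fun u : unitInterval => Q01 (((i:ℝ) + (u:ℝ))/(N:ℝ)) :=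
      Q01_continuous.comp ((continuous_const.add continuous_subtype_val).div_const _)
    set bot : C(unitInterval, X) := ⟨fun u => c' (Q01 (((i:ℝ) + (u:ℝ))/(N:ℝ))), c'.continuous.comp hbm⟩
      with hbot
    set top : C(unitInterval, X) := ⟨fun u => c'' (Q01 (((i:ℝ) + (u:ℝ))/(N:ℝ))), c''.continuous.comp hbm⟩
      with htop
    have hb0 : bot 0 = c' (τ i) := by
      show c' (Q01 (((i:ℝ) + ((0:unitInterval):ℝ))/(N:ℝ))) = c' (τ i)
      rw [hτi, show ((0:unitInterval):ℝ) = 0 from rfl, add_zero]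
    have hb1 : bot 1 = c' (τ (i+1)) := by
      show c' (Q01 (((i:ℝ) + ((1:unitInterval):ℝ))/(N:ℝ))) = c' (τ (i+1))
      rw [hτi, show ((1:unitInterval):ℝ) = 1 from rfl]
      norm_num
    have ht0 : top 0 = c'' (τ i) := by
      show c'' (Q01 (((i:ℝ) + ((0:unitInterval):ℝ))/(N:ℝ))) = c'' (τ i)
      rw [hτi, show ((0:unitInterval):ℝ) = 0 from rfl, add_zero]
    have ht1 : top 1 = c'' (τ (i+1)) := by
      show c'' (Q01 (((i:ℝ) + ((1:unitInterval):ℝ))/(N:ℝ))) = c'' (τ (i+1))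
      rw [hτi, show ((1:unitInterval):ℝ) = 1 from rfl]
      norm_num
    obtain ⟨Λ, hΛc, hΛr, hΛfill⟩ := rectFill bot top (σ i) (σ (i+1))
      (by rw [hb0, hσ0]) (by rw [hb1, hσ0]) (by rw [ht0, hσ1]) (by rw [ht1, hσ1])
    have hball : Set.range bot ∪ Set.range (σ (i+1)) ∪ Set.range top ∪ Set.range (σ i)
        ⊆ Metric.ball (q i) T := by
      have hq2' := hq2 i
      rintro z (((⟨u, rfl⟩ | ⟨v, rfl⟩) | ⟨u, rfl⟩) | ⟨v, rfl⟩) <;> rw [Metric.mem_ball, hTε]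
      · -- bottom
        have hm : dist (c' (Q01 (((i:ℝ) + (u:ℝ))/(N:ℝ)))) (c' (τ i)) ≤ ε := hmesh' _ _ (hmeshQ i u)
        have hd : dist (bot u) (q i) ≤ dist (c' (Q01 (((i:ℝ) + (u:ℝ))/(N:ℝ)))) (c' (τ i))
            + dist (c' (τ i)) (q i) := dist_triangle _ _ _
        rw [dist_comm (c' (τ i)) (q i)] at hd
        calc dist (bot u) (q i) ≤ _ := hd
          _ < 20*ε := by linarith
      · -- right: σ (i+1)
        have hm1 := (hσb (i+1) v).1
        have hm2 : dist (c' (τ (i+1))) (c' (τ i)) ≤ ε := hmesh' _ _ (hmeshτ i)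
        calc dist (σ (i+1) v) (q i)
            ≤ dist (σ (i+1) v) (c' (τ (i+1))) + dist (c' (τ (i+1))) (c' (τ i))
              + dist (c' (τ i)) (q i) := dist_triangle4 _ _ _ _
          _ < 20*ε := by rw [dist_comm (c' (τ i)) (q i)]; linarith
      · -- top
        have hm : dist (c'' (Q01 (((i:ℝ) + (u:ℝ))/(N:ℝ)))) (c'' (τ i)) ≤ ε := hmesh'' _ _ (hmeshQ i u)
        have hm2 : dist (c'' (τ i)) (c' (τ i)) ≤ 11*ε := by
          rw [dist_comm]; exact h11 (τ i)
        calc dist (top u) (q i)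
            ≤ dist (c'' (Q01 (((i:ℝ) + (u:ℝ))/(N:ℝ)))) (c'' (τ i)) + dist (c'' (τ i)) (c' (τ i))
              + dist (c' (τ i)) (q i) := dist_triangle4 _ _ _ _
          _ < 20*ε := by rw [dist_comm (c' (τ i)) (q i)]; linarith
      · -- left: σ i
        have hm1 := (hσb i v).1
        calc dist (σ i v) (q i) ≤ dist (σ i v) (c' (τ i)) + dist (c' (τ i)) (q i) :=
            dist_triangle _ _ _
          _ < 20*ε := by rw [dist_comm (c' (τ i)) (q i)]; linarith
    have hcon : LoopContractibleIn Λ (Metric.ball (q i) 1) :=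
      hcontr (q i) (Metric.mem_ball.2 (hq1 i)) Λ hΛc (hΛr.trans hball)
    obtain ⟨F, hF1, hF2, hF3, hF4, hFr⟩ := hΛfill _ hcon
    exact ⟨F, hF1, hF2, hF3, hF4, hFr.trans (hball12 i)⟩
  -- glue rectangles dyadically
  have glue : ∀ j : ℕ, ∀ i : ℕ, ∃ G : C(unitInterval × unitInterval, X),
      (∀ u : unitInterval, G (u, 0) = c' (Q01 (((i:ℝ) * 2^j + 2^j * (u:ℝ))/(N:ℝ)))) ∧
      (∀ u : unitInterval, G (u, 1) = c'' (Q01 (((i:ℝ) * 2^j + 2^j * (u:ℝ))/(N:ℝ)))) ∧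
      (∀ v, G (0, v) = σ (i * 2^j) v) ∧ (∀ v, G (1, v) = σ (i * 2^j + 2^j) v) ∧
      Set.range G ⊆ Metric.ball x 2 := by
    intro j
    induction j with
    | zero =>
      intro i
      obtain ⟨F, hh1, hh2, hh3, hh4, hh5⟩ := hrect i
      refine ⟨F, ?_, ?_, ?_, ?_, hh5⟩
      · intro u
        rw [hh1 u]
        norm_num
      · intro u
        rw [hh2 u]
        norm_num
      · intro v
        rw [pow_zero, Nat.mul_one]
        exact hh3 v
      · intro v
        rw [pow_zero, Nat.mul_one]
        exact hh4 v
    | succ j ih =>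
      intro i
      obtain ⟨G₁, hG11, hG12, hG13, hG14, hG15⟩ := ih (2*i)
      obtain ⟨G₂, hG21, hG22, hG23, hG24, hG25⟩ := ih (2*i+1)
      have hmid : ∀ v, G₁ (1, v) = G₂ (0, v) := by
        intro v
        rw [hG14 v, hG23 v, show 2*i*2^j + 2^j = (2*i+1)*2^j from by ring]
      have hGc : Continuous fun p : unitInterval × unitInterval =>
          if ((p.1:ℝ)) ≤ 1/2 then G₁ (Q01 (2*(p.1:ℝ)), p.2) else G₂ (Q01 (2*(p.1:ℝ) - 1), p.2) := by
        refine Continuous.if_le ?_ ?_ (continuous_subtype_val.comp continuous_fst) continuous_const ?_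
        · exact G₁.continuous.comp ((Q01_continuous.comp (by fun_prop)).prodMk continuous_snd)
        · exact G₂.continuous.comp ((Q01_continuous.comp (by fun_prop)).prodMk continuous_snd)
        · intro p hp
          rw [hp, show (2:ℝ)*(1/2) - 1 = 0 from by norm_num, show (2:ℝ)*(1/2) = 1 from by norm_num,
            Q01_of_one_le le_rfl, Q01_of_nonpos le_rfl]
          exact hmid p.2
      refine ⟨⟨fun p => if ((p.1:ℝ)) ≤ 1/2 then G₁ (Q01 (2*(p.1:ℝ)), p.2)
        else G₂ (Q01 (2*(p.1:ℝ) - 1), p.2), hGc⟩, ?_, ?_, ?_, ?_, ?_⟩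
      · intro u
        show (if ((u:ℝ)) ≤ 1/2 then G₁ (Q01 (2*(u:ℝ)), (0:unitInterval))
          else G₂ (Q01 (2*(u:ℝ) - 1), (0:unitInterval))) = _
        by_cases h : (u:ℝ) ≤ 1/2
        · rw [if_pos h, hG11 (Q01 (2*(u:ℝ)))]
          have hco : ((Q01 (2*(u:ℝ)) : unitInterval) : ℝ) = 2*(u:ℝ) :=
            Q01_coe (by linarith [u.2.1]) (by linarith)
          rw [hco]
          congr 2
          push_cast
          rw [pow_succ]
          ring
        · rw [if_neg h, hG21 (Q01 (2*(u:ℝ) - 1))]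
          push_neg at h
          have hco : ((Q01 (2*(u:ℝ) - 1) : unitInterval) : ℝ) = 2*(u:ℝ) - 1 :=
            Q01_coe (by linarith) (by linarith [u.2.2])
          rw [hco]
          congr 2
          push_cast
          rw [pow_succ]
          ring
      · intro u
        show (if ((u:ℝ)) ≤ 1/2 then G₁ (Q01 (2*(u:ℝ)), (1:unitInterval))
          else G₂ (Q01 (2*(u:ℝ) - 1), (1:unitInterval))) = _
        by_cases h : (u:ℝ) ≤ 1/2
        · rw [if_pos h, hG12 (Q01 (2*(u:ℝ)))]
          have hco : ((Q01 (2*(u:ℝ)) : unitInterval) : ℝ) = 2*(u:ℝ) :=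
            Q01_coe (by linarith [u.2.1]) (by linarith)
          rw [hco]
          congr 2
          push_cast
          rw [pow_succ]
          ring
        · rw [if_neg h, hG22 (Q01 (2*(u:ℝ) - 1))]
          push_neg at h
          have hco : ((Q01 (2*(u:ℝ) - 1) : unitInterval) : ℝ) = 2*(u:ℝ) - 1 :=
            Q01_coe (by linarith) (by linarith [u.2.2])
          rw [hco]
          congr 2
          push_cast
          rw [pow_succ]
          ring
      · intro v
        show (if (((0:unitInterval):ℝ)) ≤ 1/2 then G₁ (Q01 (2*((0:unitInterval):ℝ)), v)
          else G₂ (Q01 (2*((0:unitInterval):ℝ) - 1), v)) = _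
        rw [if_pos (by rw [show ((0:unitInterval):ℝ) = 0 from rfl]; norm_num),
          show (2:ℝ)*((0:unitInterval):ℝ) = 0 from by rw [show ((0:unitInterval):ℝ) = 0 from rfl]; ring,
          Q01_of_nonpos le_rfl, hG13 v, show 2*i*2^j = i*2^(j+1) from by rw [pow_succ]; ring]
      · intro v
        show (if (((1:unitInterval):ℝ)) ≤ 1/2 then G₁ (Q01 (2*((1:unitInterval):ℝ)), v)
          else G₂ (Q01 (2*((1:unitInterval):ℝ) - 1), v)) = _
        rw [if_neg (by rw [show ((1:unitInterval):ℝ) = 1 from rfl]; norm_num),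
          show (2:ℝ)*((1:unitInterval):ℝ) - 1 = 1 from by rw [show ((1:unitInterval):ℝ) = 1 from rfl]; ring,
          Q01_of_one_le le_rfl, hG24 v,
          show (2*i+1)*2^j + 2^j = i*2^(j+1) + 2^(j+1) from by rw [pow_succ]; ring]
      · rintro z ⟨p, rfl⟩
        show (if ((p.1:ℝ)) ≤ 1/2 then G₁ (Q01 (2*(p.1:ℝ)), p.2)
          else G₂ (Q01 (2*(p.1:ℝ) - 1), p.2)) ∈ Metric.ball x 2
        split_ifs
        · exact hG15 (Set.mem_range_self _)
        · exact hG25 (Set.mem_range_self _)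
  obtain ⟨G, hG1, hG2, hG3, hG4, hG5⟩ := glue K 0
  refine ⟨G, ?_, ?_, ?_, hG5⟩
  · intro t
    rw [hG1 t]
    have harg : (((0:ℕ):ℝ) * 2^K + 2^K * (t:ℝ))/(N:ℝ) = (t:ℝ) := by
      rw [hNK]
      push_cast
      field_simp
      ring
    rw [harg, Q01_val]
  · intro t
    rw [hG2 t]
    have harg : (((0:ℕ):ℝ) * 2^K + 2^K * (t:ℝ))/(N:ℝ) = (t:ℝ) := by
      rw [hNK]
      push_cast
      field_simp
      ring
    rw [harg, Q01_val]
  · intro s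
    rw [hG3 s, hG4 s, Nat.zero_mul, Nat.zero_add, ← hN, hσN]
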